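/- Let n ≥ 2, p : Fin n → ℝ with 0 < p j ≤ 1, and D : Fin n → ℝ. Set J = {0,…,n-2} and J' = {0,…,n-1}. Define p_S = 1 - ∏_{j∈S}(1-p j) and D_S = (∑_{j∈S} p j D j ∏_{k∈S,k<j}(1-p k))/p_S (when p_S > 0). Then, assuming p_J > 0, the aggregation identity holds: D_{J'} = (p_J * D_J + (1 - p_J) * p (n-1) * D (n-1)) / (1 - (1 - p_J)(1 - p (n-1))). -/

import Mathlib

open Finset

theorem anypath_aggregation_identity (n : ℕ) (p D : Fin (n + 2) → ℝ)
    (hp : ∀ j, 0 < p j ∧ p j ≤ 1) :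
    let J : Finset (Fin (n + 2)) := Finset.Iio (Fin.last (n + 1))
    let J' : Finset (Fin (n + 2)) := Finset.univ
    let pS : Finset (Fin (n + 2)) → ℝ := fun S => 1 - ∏ j ∈ S, (1 - p j)
    let DS : Finset (Fin (n + 2)) → ℝ := fun S =>
      (∑ j ∈ S, p j * D j * ∏ k ∈ S.filter (fun k => k < j), (1 - p k)) / pS S
    0 < pS J →
      DS J' = (pS J * DS J + (1 - pS J) * p (Fin.last (n + 1)) * D (Fin.last (n + 1))) /
        (1 - (1 - pS J) * (1 - p (Fin.last (n + 1)))) := by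
  intro J J' pS DS hpos
  set l := Fin.last (n + 1) with hl
  have hlast : l ∉ J := by
    simp only [J, mem_Iio]
    exact lt_irrefl l
  have hins : insert l J = J' := by
    ext x
    simp only [J, J', mem_insert, mem_Iio, mem_univ, iff_true]
    rcases lt_or_eq_of_le (Fin.le_last x) with h | h
    · exact Or.inr h
    · exact Or.inl h
  set q : ℝ := ∏ j ∈ J, (1 - p j) with hq
  have hq0 : 0 ≤ q := by
    apply Finset.prod_nonneg
    intro i _
    linarith [(hp i).2]
  have hq1 : q < 1 := by
    have h' : pS J = 1 - q := rfl
    linarith [h' ▸ hpos]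
  have hpl := hp l
  have hprod : ∏ j ∈ J', (1 - p j) = (1 - p l) * q := by
    rw [← hins, Finset.prod_insert hlast]
  have hfl : J'.filter (fun k => k < l) = J := by
    ext x
    simp only [mem_filter, J', mem_univ, true_and, J, mem_Iio]
    exact Iff.rfl
  have hfilter : ∀ j ∈ J, J'.filter (fun k => k < j) = J.filter (fun k => k < j) := by
    intro j hj
    have hjl : j < l := by simpa only [J, mem_Iio] using hj
    ext k
    simp only [mem_filter, J', mem_univ, true_and, J, mem_Iio]
    exact ⟨fun h => ⟨lt_trans h hjl, h⟩, fun h => h.2⟩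
  set S : ℝ := ∑ j ∈ J, p j * D j * ∏ k ∈ J.filter (fun k => k < j), (1 - p k) with hS
  have hsum : ∑ j ∈ J', p j * D j * ∏ k ∈ J'.filter (fun k => k < j), (1 - p k)
      = p l * D l * q + S := by
    rw [← hins, Finset.sum_insert hlast, hins, hfl, hS]
    congr 1
    apply Finset.sum_congr rfl
    intro j hj
    rw [hfilter j hj]
  have hpSJ : pS J = 1 - q := rfl
  have hpSJ' : pS J' = 1 - (1 - p l) * q := by
    simp only [pS, hprod]
  have hd : 0 < 1 - (1 - p l) * q := by
    have h1 : 0 ≤ 1 - p l := by linarith [hpl.2]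
    have : (1 - p l) * q < 1 := by
      calc (1 - p l) * q ≤ 1 * q := by
            apply mul_le_mul_of_nonneg_right _ hq0
            linarith [hpl.1]
        _ = q := one_mul q
        _ < 1 := hq1
    linarith
  have h1q : (1 : ℝ) - q ≠ 0 := by linarith
  have hd0 : 1 - (1 - p l) * q ≠ 0 := ne_of_gt hd
  have hd0' : 1 - (1 - (1 - q)) * (1 - p l) ≠ 0 := by
    have h' : 1 - (1 - (1 - q)) * (1 - p l) = 1 - (1 - p l) * q := by ring
    rw [h']; exact hd0
  simp only [DS, hsum, hpSJ, hpSJ']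
  have hcancel : (1 - q) * (S / (1 - q)) = S := by field_simp
  rw [hcancel, div_eq_div_iff hd0 hd0']
  ring
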